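/- Let (w_n)_{n≥1} be positive reals with ∑_{n≥1} w_n = 1 and let (a_n)_{n≥1} be a strictly increasing sequence of reals. For each k set b_k := inf_{n≠k} |a_k - a_n - 1|, and assume that w_k·b_k³ → ∞ as k → ∞. Then for every t > 0 the function G_t(x) = ∑_{n≥1} w_n·((x - a_n)² + t²)⁻¹ satisfies G_t'(a_k - 1) > 0 for all sufficiently large k; in particular, G_t is not unimodal for any t > 0. -/

import Mathlib

open MeasureTheory Real Set Filter Topology

/-- A function `f : ℝ → ℝ` is unimodal if there is a mode `a` such that `f` is
nondecreasing on `(-∞, a]` and nonincreasing on `[a, ∞)`. -/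
def Unimodal (f : ℝ → ℝ) : Prop :=
  ∃ a : ℝ, MonotoneOn f (Set.Iic a) ∧ AntitoneOn f (Set.Ici a)

/-- Uniform bound on the derivative of a Cauchy kernel. -/
lemma cauchy_deriv_bound (t u : ℝ) (ht : 0 < t) :
    |(-(2 * u)) / ((u ^ 2 + t ^ 2) ^ 2)| ≤ (t ^ 3)⁻¹ * 2 := by
  have hd : (0:ℝ) < (u ^ 2 + t ^ 2) ^ 2 := by positivity
  rw [abs_div, abs_neg, abs_of_pos hd, div_le_iff₀ hd]
  have h1 : 2 * |u| * t ≤ u ^ 2 + t ^ 2 := by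
    nlinarith [sq_nonneg (|u| - t), sq_abs u, abs_nonneg u]
  have h2 : t ^ 2 ≤ u ^ 2 + t ^ 2 := by nlinarith [sq_nonneg u]
  have h3 : (2 * |u| * t) * t ^ 2 ≤ (u ^ 2 + t ^ 2) * (u ^ 2 + t ^ 2) :=
    mul_le_mul h1 h2 (by positivity) (by nlinarith [sq_abs u, abs_nonneg u])
  have habs : |2 * u| = 2 * |u| := by
    rw [abs_mul]; norm_num
  rw [habs]
  have ht3 : (0:ℝ) < t ^ 3 := by positivity
  rw [show (t ^ 3)⁻¹ * 2 * ((u ^ 2 + t ^ 2) ^ 2) = 2 * ((u ^ 2 + t ^ 2) ^ 2) / t ^ 3 by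
    field_simp, le_div_iff₀ ht3]
  nlinarith [h3, sq_nonneg (u ^ 2 + t ^ 2)]

/-- Tail bound on the derivative of the Cauchy kernel far from the center. -/
lemma cauchy_deriv_tail_bound (t u b : ℝ) (ht : 0 < t) (hb : 0 < b) (hub : b ≤ |u|) :
    |(-(2 * u)) / ((u ^ 2 + t ^ 2) ^ 2)| ≤ 2 / b ^ 3 := by
  have hd : (0:ℝ) < (u ^ 2 + t ^ 2) ^ 2 := by positivity
  have hb3 : (0:ℝ) < b ^ 3 := by positivity
  rw [abs_div, abs_neg, abs_of_pos hd, div_le_div_iff₀ hd hb3]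
  have habs : |2 * u| = 2 * |u| := by rw [abs_mul]; norm_num
  rw [habs]
  have h1 : b ^ 3 ≤ |u| ^ 3 := pow_le_pow_left₀ hb.le hub 3
  have h2 : 2 * |u| * b ^ 3 ≤ 2 * |u| * |u| ^ 3 := by
    have : 0 ≤ 2 * |u| := by positivity
    exact mul_le_mul_of_nonneg_left h1 this
  have h3 : 2 * |u| * |u| ^ 3 = 2 * (u ^ 2) ^ 2 := by
    have : |u| ^ 4 = (u ^ 2) ^ 2 := by
      rw [show (4:ℕ) = 2 * 2 from rfl, pow_mul, sq_abs]
    nlinarith [this]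
  have h4 : 2 * (u ^ 2) ^ 2 ≤ 2 * (u ^ 2 + t ^ 2) ^ 2 := by
    nlinarith [sq_nonneg u, sq_nonneg t, sq_nonneg (u^2 + t^2)]
  linarith

theorem discrete_cauchy_mixture_never_unimodal
    (w a b : ℕ → ℝ) (hw : ∀ n, 0 < w n) (hsum : ∑' n, w n = 1)
    (ha : StrictMono a)
    (hb : ∀ k, b k = sInf {r : ℝ | ∃ n, n ≠ k ∧ r = |a k - a n - 1|})
    (hbtop : Tendsto (fun k => w k * b k ^ 3) atTop atTop) :
    ∀ t : ℝ, 0 < t →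
      (∀ᶠ k in atTop,
        0 < deriv (fun x : ℝ => ∑' n, w n * ((x - a n) ^ 2 + t ^ 2)⁻¹) (a k - 1)) ∧
      ¬ Unimodal (fun x : ℝ => ∑' n, w n * ((x - a n) ^ 2 + t ^ 2)⁻¹) := by
  intro t ht
  -- summability of the weights
  have hsw : Summable w := by
    by_contra h
    rw [tsum_eq_zero_of_not_summable h] at hsum
    norm_num at hsum
  have hw1 : ∀ k, w k ≤ 1 := by
    intro k
    calc w k ≤ ∑' n, w n := Summable.le_tsum hsw k (fun n _ => (hw n).le)
    _ = 1 := hsum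
  -- nonnegativity of b
  have hbnn : ∀ k, 0 ≤ b k := by
    intro k
    rw [hb k]
    exact Real.sInf_nonneg (by rintro r ⟨n, -, rfl⟩; exact abs_nonneg _)
  -- b k is a lower bound for the distances
  have hble : ∀ k n, n ≠ k → b k ≤ |a k - a n - 1| := by
    intro k n hn
    rw [hb k]
    exact csInf_le ⟨0, by rintro r ⟨m, -, rfl⟩; exact abs_nonneg _⟩ ⟨n, hn, rfl⟩
  -- the summand and its derivative
  set g : ℕ → ℝ → ℝ := fun n x => w n * ((x - a n) ^ 2 + t ^ 2)⁻¹ with hg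
  set g' : ℕ → ℝ → ℝ :=
    fun n x => w n * ((-(2 * (x - a n))) / (((x - a n) ^ 2 + t ^ 2) ^ 2)) with hg'
  have hpos : ∀ (n : ℕ) (x : ℝ), (0:ℝ) < (x - a n) ^ 2 + t ^ 2 := by
    intro n x; positivity
  have hderiv : ∀ (n : ℕ) (x : ℝ), HasDerivAt (g n) (g' n x) x := by
    intro n x
    have h1 : HasDerivAt (fun y : ℝ => y - a n) 1 x := (hasDerivAt_id x).sub_const _
    have h2 : HasDerivAt (fun y : ℝ => (y - a n) ^ 2 + t ^ 2) (2 * (x - a n)) x := by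
      simpa using ((h1.pow 2).add_const (t ^ 2))
    have h3 := (h2.inv (ne_of_gt (hpos n x))).const_mul (w n)
    simpa [hg, hg', neg_div] using h3
  -- summable uniform bound on derivatives
  have hbound : ∀ (n : ℕ) (x : ℝ), ‖g' n x‖ ≤ w n * ((t ^ 3)⁻¹ * 2) := by
    intro n x
    rw [hg']
    simp only [Real.norm_eq_abs, abs_mul, abs_of_pos (hw n)]
    exact mul_le_mul_of_nonneg_left (cauchy_deriv_bound t (x - a n) ht) (hw n).le
  have hsumu : Summable (fun n => w n * ((t ^ 3)⁻¹ * 2)) := hsw.mul_right _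
  have hsum0 : Summable (fun n => g n 0) := by
    apply Summable.of_nonneg_of_le (fun n => ?_) (fun n => ?_) (hsw.mul_right ((t ^ 2)⁻¹))
    · simp only [hg]
      exact mul_nonneg (hw n).le (by positivity)
    · simp only [hg]
      have h1 : ((0 - a n) ^ 2 + t ^ 2)⁻¹ ≤ (t ^ 2)⁻¹ := by
        apply inv_anti₀ (by positivity)
        nlinarith [sq_nonneg (0 - a n)]
      exact mul_le_mul_of_nonneg_left h1 (hw n).le
  have hF : ∀ x : ℝ, HasDerivAt (fun x : ℝ => ∑' n, w n * ((x - a n) ^ 2 + t ^ 2)⁻¹)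
      (∑' n, g' n x) x := by
    intro x
    exact hasDerivAt_tsum hsumu hderiv hbound hsum0 x
  have hg'sum : ∀ x : ℝ, Summable (fun n => g' n x) := fun x =>
    Summable.of_norm_bounded hsumu (fun n => hbound n x)
  -- the key estimate
  have hkey : ∀ k : ℕ, (1 + t ^ 2) ^ 2 < w k * b k ^ 3 → 0 < ∑' n, g' n (a k - 1) := by
    intro k hk
    have hb0 : 0 < b k := by
      by_contra hc
      push_neg at hc
      have : b k ^ 3 ≤ 0 := (by decide : Odd 3).pow_nonpos hc
      nlinarith [hw k, mul_nonpos_of_nonneg_of_nonpos (hw k).le this, sq_nonneg (1 + t^2)]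
    set x₀ : ℝ := a k - 1 with hx₀
    have hxk : x₀ - a k = -1 := by rw [hx₀]; ring
    have hgk : g' k x₀ = w k * (2 / (1 + t ^ 2) ^ 2) := by
      simp only [hg', hxk]
      norm_num
    -- split off the k-th term
    rw [Summable.tsum_eq_add_tsum_ite (hg'sum x₀) k]
    -- bound the tail from below
    have htail : ∀ n : ℕ, -(w n * (2 / b k ^ 3)) ≤ (if n = k then 0 else g' n x₀) := by
      intro n
      by_cases hn : n = k
      · rw [hn, if_pos rfl]
        have h0 : 0 ≤ w k * (2 / b k ^ 3) :=
          mul_nonneg (hw k).le (by positivity)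
        linarith
      · rw [if_neg hn]
        have hub : b k ≤ |x₀ - a n| := by
          have : x₀ - a n = a k - a n - 1 := by rw [hx₀]; ring
          rw [this]
          exact hble k n hn
        have habs : |g' n x₀| ≤ w n * (2 / b k ^ 3) := by
          rw [hg']
          simp only [abs_mul, abs_of_pos (hw n)]
          exact mul_le_mul_of_nonneg_left
            (cauchy_deriv_tail_bound t (x₀ - a n) (b k) ht hb0 hub) (hw n).le
        linarith [neg_abs_le (g' n x₀)]
    have hsummtail : Summable (fun n => if n = k then (0:ℝ) else g' n x₀) := by
      apply Summable.of_norm_bounded hsumu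
      intro n
      by_cases hn : n = k
      · simp only [hn, if_true, norm_zero]
        have ht2 : (0:ℝ) ≤ (t ^ 3)⁻¹ * 2 := by positivity
        exact mul_nonneg (hw k).le ht2
      · rw [if_neg hn]
        exact hbound n x₀
    have hsumlow : Summable (fun n => -(w n * (2 / b k ^ 3))) := (hsw.mul_right _).neg
    have hT : -(2 / b k ^ 3) ≤ ∑' n, (if n = k then (0:ℝ) else g' n x₀) := by
      calc -(2 / b k ^ 3) = ∑' n, -(w n * (2 / b k ^ 3)) := by
            rw [tsum_neg, tsum_mul_right, hsum, one_mul]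
      _ ≤ ∑' n, (if n = k then (0:ℝ) else g' n x₀) := Summable.tsum_le_tsum htail hsumlow hsummtail
    rw [hgk]
    have hfin : 2 / b k ^ 3 < w k * (2 / (1 + t ^ 2) ^ 2) := by
      have hb3 : (0:ℝ) < b k ^ 3 := pow_pos hb0 3
      have h12 : (0:ℝ) < (1 + t ^ 2) ^ 2 := by positivity
      rw [div_lt_iff₀ hb3,
        show w k * (2 / (1 + t ^ 2) ^ 2) * b k ^ 3
          = 2 * (w k * b k ^ 3) / (1 + t ^ 2) ^ 2 by ring,
        lt_div_iff₀ h12]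
      nlinarith [hk]
    linarith
  -- eventually positive derivative
  have hev : ∀ᶠ k in atTop,
      0 < deriv (fun x : ℝ => ∑' n, w n * ((x - a n) ^ 2 + t ^ 2)⁻¹) (a k - 1) := by
    filter_upwards [hbtop.eventually_gt_atTop ((1 + t ^ 2) ^ 2)] with k hk
    rw [(hF (a k - 1)).deriv]
    exact hkey k hk
  refine ⟨hev, ?_⟩
  -- b tends to infinity
  have hb3top : Tendsto (fun k => b k ^ 3) atTop atTop := by
    apply tendsto_atTop_mono _ hbtop
    intro k
    calc w k * b k ^ 3 ≤ 1 * b k ^ 3 :=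
          mul_le_mul_of_nonneg_right (hw1 k) (pow_nonneg (hbnn k) 3)
    _ = b k ^ 3 := one_mul _
  have hbt : Tendsto b atTop atTop := by
    rw [tendsto_atTop]
    intro M
    filter_upwards [hb3top.eventually_gt_atTop ((max M 0) ^ 3)] with k hk
    by_contra hc
    push_neg at hc
    have h1 : b k ≤ max M 0 := le_trans hc.le (le_max_left _ _)
    exact absurd (pow_le_pow_left₀ (hbnn k) h1 3) (not_le.mpr hk)
  -- not unimodal
  rintro ⟨m, -, hanti⟩
  obtain ⟨k, hk1, hk2, hk3⟩ : ∃ k : ℕ,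
      0 < deriv (fun x : ℝ => ∑' n, w n * ((x - a n) ^ 2 + t ^ 2)⁻¹) (a k - 1) ∧
      max 1 (m - a 0 + 1) < b k ∧ 1 ≤ k := by
    have := (hev.and ((hbt.eventually_gt_atTop (max 1 (m - a 0 + 1))).and
      (eventually_ge_atTop 1))).exists
    obtain ⟨k, h1, h2, h3⟩ := this
    exact ⟨k, h1, h2, h3⟩
  -- a k - 1 > m
  have hx0m : m < a k - 1 := by
    have ha0k : a 0 < a k := ha (Nat.pos_of_ne_zero (by omega))
    have hble0 : b k ≤ |a k - a 0 - 1| := hble k 0 (by omega)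
    have hb1 : 1 < b k := lt_of_le_of_lt (le_max_left _ _) hk2
    have hbm : m - a 0 + 1 < b k := lt_of_le_of_lt (le_max_right _ _) hk2
    rcases abs_cases (a k - a 0 - 1) with ⟨heq, -⟩ | ⟨heq, hle⟩
    · rw [heq] at hble0; linarith
    · rw [heq] at hble0; linarith
  -- derivative nonpositive from antitonicity: contradiction
  set x₀ : ℝ := a k - 1 with hx₀
  have hd := hF x₀
  have hslope : Tendsto (slope (fun x : ℝ => ∑' n, w n * ((x - a n) ^ 2 + t ^ 2)⁻¹) x₀)
      (𝓝[>] x₀) (𝓝 (∑' n, g' n x₀)) :=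
    (hasDerivAt_iff_tendsto_slope.1 hd).mono_left
      (nhdsWithin_mono _ fun y hy => ne_of_gt hy)
  have hS : (∑' n, g' n x₀) ≤ 0 := by
    refine le_of_tendsto hslope ?_
    filter_upwards [self_mem_nhdsWithin] with y hy
    have hmem1 : x₀ ∈ Set.Ici m := le_of_lt hx0m
    have hmem2 : y ∈ Set.Ici m := le_of_lt (hx0m.trans hy)
    have hle : (fun x : ℝ => ∑' n, w n * ((x - a n) ^ 2 + t ^ 2)⁻¹) y ≤
        (fun x : ℝ => ∑' n, w n * ((x - a n) ^ 2 + t ^ 2)⁻¹) x₀ :=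
      hanti hmem1 hmem2 (le_of_lt hy)
    rw [slope_def_field]
    apply div_nonpos_of_nonpos_of_nonneg
    · linarith
    · have : x₀ < y := hy
      linarith
  rw [(hF x₀).deriv] at hk1
  linarith
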